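/- In the Petrov–Galerkin setting (Pₙ → I_X, Qₙ → I_Y strongly, Aₙ := Qₙ A Pₙ with closed range), if b belongs to the closure of R(A) but not to R(A), then ‖Aₙ† Qₙ b‖ → ∞ as n → ∞. -/

import Mathlib

noncomputable section
open ContinuousLinearMap Submodule Filter Topology MeasureTheory

/-- The orthogonal projection onto the closure of a submodule, as an operator on the ambient
Hilbert space. -/
def projCl {E : Type*} [NormedAddCommGroup E] [InnerProductSpace ℂ E] [CompleteSpace E]
    (K : Submodule ℂ E) : E →L[ℂ] E :=
  haveI : CompleteSpace K.topologicalClosure := K.isClosed_topologicalClosure.completeSpace_coe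
  K.topologicalClosure.subtypeL ∘L orthogonalProjection K.topologicalClosure

/-- `P` is the orthogonal projection of `E` onto the subspace `K`:
idempotent, self-adjoint, with range `K`. -/
def IsOrthProj {E : Type*} [NormedAddCommGroup E] [InnerProductSpace ℂ E] [CompleteSpace E]
    (P : E →L[ℂ] E) (K : Submodule ℂ E) : Prop :=
  P ∘L P = P ∧ ContinuousLinearMap.adjoint P = P ∧ LinearMap.range (P : E →ₗ[ℂ] E) = K

/-- `B` is the Moore–Penrose generalized inverse of `T`. -/
def IsMPInv {E F : Type*} [NormedAddCommGroup E] [InnerProductSpace ℂ E] [CompleteSpace E]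
    [NormedAddCommGroup F] [InnerProductSpace ℂ F] [CompleteSpace F]
    (T : E →L[ℂ] F) (B : F →L[ℂ] E) : Prop :=
  T ∘L B ∘L T = T ∧ B ∘L T ∘L B = B ∧
  ContinuousLinearMap.adjoint (T ∘L B) = T ∘L B ∧
  ContinuousLinearMap.adjoint (B ∘L T) = B ∘L T

/-- An idempotent self-adjoint operator is pointwise contractive. -/
lemma aux_proj_norm_le {E : Type*} [NormedAddCommGroup E] [InnerProductSpace ℂ E]
    [CompleteSpace E] (T : E →L[ℂ] E) (h1 : T ∘L T = T)
    (h2 : ContinuousLinearMap.adjoint T = T) (z : E) : ‖T z‖ ≤ ‖z‖ := by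
  have hin : (inner ℂ (T z) (T z) : ℂ) = inner ℂ (T z) z := by
    rw [← ContinuousLinearMap.adjoint_inner_left T z (T z)]
    rw [h2, ← ContinuousLinearMap.comp_apply, h1]
  have h3 := norm_inner_le_norm (𝕜 := ℂ) (T z) z
  have h4 : ‖T z‖ ^ 2 ≤ ‖T z‖ * ‖z‖ := by
    have h5 : RCLike.re (inner ℂ (T z) (T z) : ℂ) = ‖T z‖ ^ 2 := inner_self_eq_norm_sq _
    calc ‖T z‖ ^ 2 = RCLike.re (inner ℂ (T z) z : ℂ) := by rw [← hin, h5]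
      _ ≤ ‖(inner ℂ (T z) z : ℂ)‖ := RCLike.re_le_norm _
      _ ≤ ‖T z‖ * ‖z‖ := h3
  nlinarith [norm_nonneg (T z), norm_nonneg z]

/-- Composition of pointwise-contractive strongly convergent operators with a
convergent sequence. -/
lemma aux_comp_tendsto {E : Type*} [NormedAddCommGroup E] [NormedSpace ℂ E]
    (T : ℕ → E →L[ℂ] E) (hTb : ∀ n z, ‖T n z‖ ≤ ‖z‖)
    (hTc : ∀ z : E, Tendsto (fun n => T n z) atTop (nhds z))
    {y : ℕ → E} {l : E} (hy : Tendsto y atTop (nhds l)) :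
    Tendsto (fun n => T n (y n)) atTop (nhds l) := by
  rw [tendsto_iff_norm_sub_tendsto_zero] at hy ⊢
  have hTl := tendsto_iff_norm_sub_tendsto_zero.mp (hTc l)
  have hsum : Tendsto (fun n => ‖y n - l‖ + ‖T n l - l‖) atTop (nhds 0) := by
    simpa using hy.add hTl
  refine squeeze_zero (fun n => norm_nonneg _) (fun n => ?_) hsum
  calc ‖T n (y n) - l‖ = ‖T n (y n - l) + (T n l - l)‖ := by rw [map_sub]; congr 1; abel
    _ ≤ ‖T n (y n - l)‖ + ‖T n l - l‖ := norm_add_le _ _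
    _ ≤ ‖y n - l‖ + ‖T n l - l‖ := add_le_add_left (hTb n _) _

/-- **Statement 2** (Theorem 1.1 (a)): in the Petrov–Galerkin setting, if
`b ∉ R(A) ⊕ R(A)^⊥ = D(A†)` then `‖Aₙ† Qₙ Q_{cl R(A)} b‖ → ∞`. -/
theorem stmt3 {X Y : Type*} [NormedAddCommGroup X] [InnerProductSpace ℂ X] [CompleteSpace X]
    [NormedAddCommGroup Y] [InnerProductSpace ℂ Y] [CompleteSpace Y]
    (hX : ¬ FiniteDimensional ℂ X) (hY : ¬ FiniteDimensional ℂ Y)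
    (A : X →L[ℂ] Y) (Xn : ℕ → Submodule ℂ X) (Yn : ℕ → Submodule ℂ Y)
    (hXn : ∀ n, IsClosed (Xn n : Set X)) (hYn : ∀ n, IsClosed (Yn n : Set Y))
    (P : ℕ → X →L[ℂ] X) (Q : ℕ → Y →L[ℂ] Y)
    (hP : ∀ n, IsOrthProj (P n) (Xn n)) (hQ : ∀ n, IsOrthProj (Q n) (Yn n))
    (hPconv : ∀ x : X, Filter.Tendsto (fun n => P n x) atTop (nhds x))
    (hQconv : ∀ y : Y, Filter.Tendsto (fun n => Q n y) atTop (nhds y))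
    (An : ℕ → X →L[ℂ] Y) (hAn : ∀ n, An n = Q n ∘L A ∘L P n)
    (hRanAn : ∀ n, IsClosed (LinearMap.range (An n : X →ₗ[ℂ] Y) : Set Y))
    (B : ℕ → Y →L[ℂ] X) (hB : ∀ n, IsMPInv (An n) (B n))
    (b : Y) (hb1 : b ∈ (LinearMap.range (A : X →ₗ[ℂ] Y)).topologicalClosure) (hb2 : b ∉ LinearMap.range (A : X →ₗ[ℂ] Y)) :
    Filter.Tendsto (fun n => ‖B n (Q n b)‖) atTop atTop := by
  by_contra hcon
  rw [Filter.tendsto_atTop] at hcon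
  push_neg at hcon
  obtain ⟨C, hC⟩ := hcon
  have hC' : ∃ᶠ n in atTop, ‖B n (Q n b)‖ ≤ C := hC.mono fun n h => le_of_lt h
  obtain ⟨φ, hφmono, hφ⟩ := Filter.extraction_of_frequently_atTop hC'
  set x : ℕ → X := fun n => B (φ n) (Q (φ n) b) with hxdef
  have hQb : ∀ n z, ‖Q n z‖ ≤ ‖z‖ := fun n => aux_proj_norm_le _ (hQ n).1 (hQ n).2.1
  have hPb : ∀ n z, ‖P n z‖ ≤ ‖z‖ := fun n => aux_proj_norm_le _ (hP n).1 (hP n).2.1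
  -- strong convergence of `An n u → A u`
  have hAnc : ∀ u : X, Tendsto (fun n => An n u) atTop (nhds (A u)) := by
    intro u
    have h1 : Tendsto (fun n => A (P n u)) atTop (nhds (A u)) :=
      (A.continuous.tendsto u).comp (hPconv u)
    have h2 := aux_comp_tendsto Q hQb hQconv h1
    refine h2.congr fun n => ?_
    rw [hAn n]; rfl
  -- the adjoint of `An n`
  have hadj : ∀ n (y : Y),
      ContinuousLinearMap.adjoint (An n) y = P n ((ContinuousLinearMap.adjoint A) (Q n y)) := by
    intro n y
    rw [hAn n, adjoint_comp, adjoint_comp, (hP n).2.1, (hQ n).2.1]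
    rfl
  set W : X →L[ℂ] X := ContinuousLinearMap.adjoint A ∘L A with hWdef
  have hWnc : ∀ u : X,
      Tendsto (fun n => ContinuousLinearMap.adjoint (An n) (An n u)) atTop (nhds (W u)) := by
    intro u
    have h1 := aux_comp_tendsto Q hQb hQconv (hAnc u)
    have h2 : Tendsto (fun n => (ContinuousLinearMap.adjoint A) (Q n (An n u))) atTop
        (nhds ((ContinuousLinearMap.adjoint A) (A u))) :=
      ((ContinuousLinearMap.adjoint A).continuous.tendsto _).comp h1
    have h3 := aux_comp_tendsto P hPb hPconv h2
    refine h3.congr fun n => ?_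
    rw [hadj n]
  -- the key algebraic identity coming from the Moore–Penrose axioms
  have key : ∀ n u, (inner ℂ b (An n u) : ℂ)
      = inner ℂ (B n (Q n b)) (ContinuousLinearMap.adjoint (An n) (An n u)) := by
    intro n u
    obtain ⟨h1, h2, h3, h4⟩ := hB n
    obtain ⟨hQ1, hQ2, hQ3⟩ := hQ n
    have hQQ : ∀ w, Q n (Q n w) = Q n w := fun w => by
      conv_rhs => rw [← hQ1]
      rfl
    have hQAn : ∀ z, Q n (An n z) = An n z := fun z => by
      rw [hAn n]; exact hQQ _
    have hMP1 : ∀ z, An n (B n (An n z)) = An n z := fun z => by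
      conv_rhs => rw [← h1]
      rfl
    calc (inner ℂ b (An n u) : ℂ)
        = inner ℂ b (Q n (An n u)) := by rw [hQAn]
      _ = inner ℂ (ContinuousLinearMap.adjoint (Q n) b) (An n u) :=
          (ContinuousLinearMap.adjoint_inner_left (Q n) (An n u) b).symm
      _ = inner ℂ (Q n b) (An n u) := by rw [hQ2]
      _ = inner ℂ (Q n b) (An n (B n (An n u))) := by rw [hMP1]
      _ = inner ℂ (ContinuousLinearMap.adjoint (An n ∘L B n) (Q n b)) (An n u) :=
          (ContinuousLinearMap.adjoint_inner_left (An n ∘L B n) (An n u) (Q n b)).symm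
      _ = inner ℂ ((An n ∘L B n) (Q n b)) (An n u) := by rw [h3]
      _ = inner ℂ (B n (Q n b)) (ContinuousLinearMap.adjoint (An n) (An n u)) :=
          (ContinuousLinearMap.adjoint_inner_right (An n) (B n (Q n b)) (An n u)).symm
  have hxb : ∀ n, ‖x n‖ ≤ C := hφ
  have hC0 : (0 : ℝ) ≤ C := le_trans (norm_nonneg _) (hφ 0)
  -- the limit identity along the bounded subsequence
  have hlim : ∀ u : X,
      Tendsto (fun n => (inner ℂ (x n) (W u) : ℂ)) atTop (nhds (inner ℂ b (A u))) := by
    intro u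
    have hsub : Tendsto (fun n => (inner ℂ b (An (φ n) u) : ℂ)) atTop (nhds (inner ℂ b (A u))) :=
      Filter.Tendsto.inner tendsto_const_nhds ((hAnc u).comp hφmono.tendsto_atTop)
    have hdiff : Tendsto (fun n =>
        (inner ℂ (x n) (ContinuousLinearMap.adjoint (An (φ n)) (An (φ n) u) - W u) : ℂ))
        atTop (nhds 0) := by
      rw [tendsto_zero_iff_norm_tendsto_zero]
      have hWn : Tendsto (fun n =>
          ‖ContinuousLinearMap.adjoint (An (φ n)) (An (φ n) u) - W u‖) atTop (nhds 0) :=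
        tendsto_iff_norm_sub_tendsto_zero.mp ((hWnc u).comp hφmono.tendsto_atTop)
      refine squeeze_zero (fun n => norm_nonneg _) (fun n => ?_)
        (by simpa using hWn.const_mul C)
      calc ‖(inner ℂ (x n) (ContinuousLinearMap.adjoint (An (φ n)) (An (φ n) u) - W u) : ℂ)‖
          ≤ ‖x n‖ * ‖ContinuousLinearMap.adjoint (An (φ n)) (An (φ n) u) - W u‖ :=
            norm_inner_le_norm _ _
        _ ≤ C * ‖ContinuousLinearMap.adjoint (An (φ n)) (An (φ n) u) - W u‖ :=
            mul_le_mul_of_nonneg_right (hxb n) (norm_nonneg _)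
    have heq : (fun n => (inner ℂ (x n) (W u) : ℂ))
        = fun n => (inner ℂ b (An (φ n) u) : ℂ)
          - inner ℂ (x n) (ContinuousLinearMap.adjoint (An (φ n)) (An (φ n) u) - W u) := by
      funext n
      rw [inner_sub_right, key (φ n) u]
      ring
    rw [heq]
    simpa using hsub.sub hdiff
  -- the resulting a priori bound
  have hbd : ∀ u : X, ‖(inner ℂ b (A u) : ℂ)‖ ≤ C * ‖W u‖ := by
    intro u
    refine le_of_tendsto (hlim u).norm (Filter.Eventually.of_forall fun n => ?_)
    calc ‖(inner ℂ (x n) (W u) : ℂ)‖ ≤ ‖x n‖ * ‖W u‖ := norm_inner_le_norm _ _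
      _ ≤ C * ‖W u‖ := mul_le_mul_of_nonneg_right (hxb n) (norm_nonneg _)
  -- the bounded functional on the range of `W`
  set L : X →L[ℂ] ℂ := (innerSL ℂ b).comp A with hLdef
  have hLu : ∀ u : X, L u = inner ℂ b (A u) := fun u => rfl
  set Wl : X →ₗ[ℂ] X := (W : X →ₗ[ℂ] X) with hWldef
  have hker : LinearMap.ker Wl ≤ LinearMap.ker (L : X →ₗ[ℂ] ℂ) := by
    intro u hu
    have hW0 : W u = 0 := hu
    have hb0 : ‖(inner ℂ b (A u) : ℂ)‖ ≤ C * ‖W u‖ := hbd u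
    rw [hW0, norm_zero, mul_zero] at hb0
    have : (inner ℂ b (A u) : ℂ) = 0 := norm_le_zero_iff.mp hb0
    simpa [LinearMap.mem_ker, hLu] using this
  set g : ↥(LinearMap.range Wl) →ₗ[ℂ] ℂ :=
    ((LinearMap.ker Wl).liftQ (L : X →ₗ[ℂ] ℂ) hker).comp
      (Wl.quotKerEquivRange.symm : ↥(LinearMap.range Wl) →ₗ[ℂ] (X ⧸ LinearMap.ker Wl))
    with hgdef
  have hg : ∀ (u : X) (h : Wl u ∈ LinearMap.range Wl),
      g ⟨Wl u, h⟩ = inner ℂ b (A u) := by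
    intro u h
    rw [hgdef]
    simp only [LinearMap.comp_apply, LinearEquiv.coe_coe]
    rw [LinearMap.quotKerEquivRange_symm_apply_image]
    rw [Submodule.mkQ_apply, Submodule.liftQ_apply]
    exact hLu u
  have hgb : ∀ m : ↥(LinearMap.range Wl), ‖g m‖ ≤ C * ‖m‖ := by
    rintro ⟨y, u, rfl⟩
    rw [hg u ⟨u, rfl⟩]
    exact hbd u
  obtain ⟨Φ, hΦ, -⟩ := exists_extension_norm_eq (LinearMap.range Wl)
    (LinearMap.mkContinuous g C hgb)
  set v : X := (InnerProductSpace.toDual ℂ X).symm Φ with hvdef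
  have hv : ∀ u : X, (inner ℂ (A v) (A u) : ℂ) = inner ℂ b (A u) := by
    intro u
    have h1 : (inner ℂ v (W u) : ℂ) = Φ (W u) := InnerProductSpace.toDual_symm_apply
    have h2 : Φ (W u) = g ⟨Wl u, LinearMap.mem_range_self Wl u⟩ := by
      have := hΦ ⟨Wl u, LinearMap.mem_range_self Wl u⟩
      exact (by simpa [LinearMap.mkContinuous_apply] using this : Φ (Wl u) = _)
    have h3 : g ⟨Wl u, LinearMap.mem_range_self Wl u⟩ = inner ℂ b (A u) := hg u _
    have h4 : (inner ℂ v (W u) : ℂ) = inner ℂ (A v) (A u) := by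
      show (inner ℂ v ((ContinuousLinearMap.adjoint A) (A u)) : ℂ) = _
      exact ContinuousLinearMap.adjoint_inner_right A v (A u)
    rw [← h4, h1, h2, h3]
  have hd : ∀ u : X, (inner ℂ (b - A v) (A u) : ℂ) = 0 := by
    intro u; rw [inner_sub_left, hv u, sub_self]
  have hdmem : b - A v ∈ (LinearMap.range (A : X →ₗ[ℂ] Y)).topologicalClosure :=
    sub_mem hb1 (Submodule.le_topologicalClosure _ (LinearMap.mem_range_self (A : X →ₗ[ℂ] Y) v))
  have hclos : ((LinearMap.range (A : X →ₗ[ℂ] Y)).topologicalClosure : Set Y)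
      ⊆ {w : Y | (inner ℂ (b - A v) w : ℂ) = 0} := by
    rw [Submodule.topologicalClosure_coe]
    refine closure_minimal ?_ ?_
    · rintro w ⟨u, rfl⟩; exact hd u
    · exact isClosed_eq (Continuous.inner continuous_const continuous_id) continuous_const
  have h0 : (inner ℂ (b - A v) (b - A v) : ℂ) = 0 := hclos hdmem
  have hz : b - A v = 0 := inner_self_eq_zero.mp h0
  exact hb2 ⟨v, (sub_eq_zero.mp hz).symm⟩
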